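/- Let D be a finite set of positive integers, q : D → ℝ with q_k > 0 for all k ∈ D and Σ_{k∈D} q_k = 1. Fix k ∈ D, let δ_i > 0 for every i ∈ D with i ≠ k, suppose Σ_{i∈D, i≠k} i q_i / δ_i < 1, and set δ̂_k := k q_k · (1 − Σ_{i∈D, i≠k} i q_i / δ_i)^{−1}. Let V : [0, δ̂_k) → ℝ be any function such that for every t ∈ [0, δ̂_k), V(t) ∈ (0,1] and Σ_{i∈D, i≠k} i q_i/(δ_i + i V(t)) + k q_k/(t + k V(t)) = 1. Then the infection probability t ↦ x_k(t) := k V(t)/(t + k V(t)) is strictly decreasing and convex on [0, δ̂_k). -/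

import Mathlib

namespace Stmt6Aux

variable (Dp : Finset ℕ) (q δ : ℕ → ℝ)

noncomputable def Sf (v : ℝ) : ℝ := ∑ i ∈ Dp, (i:ℝ) * q i / (δ i + i * v)
noncomputable def Bf (v : ℝ) : ℝ := ∑ i ∈ Dp, (i:ℝ)^2 * q i / (δ i + i * v)^2
noncomputable def Cf (v : ℝ) : ℝ := ∑ i ∈ Dp, 2*(i:ℝ)^3 * q i / (δ i + i * v)^3

variable (hgood : ∀ i ∈ Dp, 0 < (i:ℝ) ∧ 0 < q i ∧ 0 < δ i)

section
include hgood

lemma den_pos {v : ℝ} (hv : 0 ≤ v) {i : ℕ} (hi : i ∈ Dp) : 0 < δ i + i * v := by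
  obtain ⟨h1, h2, h3⟩ := hgood i hi
  nlinarith

lemma Bf_nonneg {v : ℝ} (hv : 0 ≤ v) : 0 ≤ Bf Dp q δ v := by
  apply Finset.sum_nonneg
  intro i hi
  obtain ⟨h1, h2, h3⟩ := hgood i hi
  have := den_pos Dp q δ hgood hv hi
  positivity

lemma Cf_nonneg {v : ℝ} (hv : 0 ≤ v) : 0 ≤ Cf Dp q δ v := by
  apply Finset.sum_nonneg
  intro i hi
  obtain ⟨h1, h2, h3⟩ := hgood i hi
  have := den_pos Dp q δ hgood hv hi
  positivity

lemma key_ineq {v : ℝ} (hv : 0 ≤ v) : v * Cf Dp q δ v ≤ 2 * Bf Dp q δ v := by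
  unfold Bf Cf
  rw [Finset.mul_sum, Finset.mul_sum]
  apply Finset.sum_le_sum
  intro i hi
  obtain ⟨h1, h2, h3⟩ := hgood i hi
  have hd := den_pos Dp q δ hgood hv hi
  rw [mul_div_assoc', mul_div_assoc', div_le_div_iff₀ (by positivity) (by positivity)]
  nlinarith [pow_pos hd 2, pow_pos hd 3, mul_pos h1 h2, mul_pos (mul_pos h1 h1) (mul_pos h2 h3)]

lemma Sf_anti {v w : ℝ} (hv : 0 ≤ v) (hvw : v ≤ w) : Sf Dp q δ w ≤ Sf Dp q δ v := by
  apply Finset.sum_le_sum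
  intro i hi
  obtain ⟨h1, h2, h3⟩ := hgood i hi
  have hd := den_pos Dp q δ hgood hv hi
  apply div_le_div_of_nonneg_left (by positivity) hd
  nlinarith

lemma hasDerivAt_Sf {v : ℝ} (hv : 0 ≤ v) :
    HasDerivAt (Sf Dp q δ) (-(Bf Dp q δ v)) v := by
  unfold Sf Bf
  rw [← Finset.sum_neg_distrib]
  apply HasDerivAt.fun_sum
  intro i hi
  have hd := (den_pos Dp q δ hgood hv hi).ne'
  have h1 : HasDerivAt (fun v : ℝ => δ i + i * v) (i : ℝ) v := by
    simpa using ((hasDerivAt_id v).const_mul (i:ℝ)).const_add (δ i)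
  have h2 := (hasDerivAt_const v ((i:ℝ) * q i)).div h1 hd
  convert! h2 using 1
  field_simp
  ring

lemma hasDerivAt_Bf {v : ℝ} (hv : 0 ≤ v) :
    HasDerivAt (Bf Dp q δ) (-(Cf Dp q δ v)) v := by
  unfold Bf Cf
  rw [← Finset.sum_neg_distrib]
  apply HasDerivAt.fun_sum
  intro i hi
  have hd := (den_pos Dp q δ hgood hv hi).ne'
  have h1 : HasDerivAt (fun v : ℝ => (δ i + i * v)^2) (2 * i * (δ i + i * v)) v := by
    have h0 : HasDerivAt (fun v : ℝ => δ i + i * v) (i : ℝ) v := by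
      simpa using ((hasDerivAt_id v).const_mul (i:ℝ)).const_add (δ i)
    convert! h0.pow 2 using 1
    ring
  have h2 := (hasDerivAt_const v ((i:ℝ)^2 * q i)).div h1 (by positivity)
  convert! h2 using 1
  field_simp
  ring

end

section
variable (κ θ : ℝ)

noncomputable def Ff (v : ℝ) : ℝ := κ * θ / (1 - Sf Dp q δ v) - κ * v
noncomputable def Gf (v : ℝ) : ℝ := v * (1 - Sf Dp q δ v) / θ
noncomputable def Nf (v : ℝ) : ℝ := (1 - Sf Dp q δ v + v * Bf Dp q δ v) * (1 - Sf Dp q δ v)^2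
noncomputable def Mf (v : ℝ) : ℝ := θ * Bf Dp q δ v + (1 - Sf Dp q δ v)^2
noncomputable def Rf (v : ℝ) : ℝ := -(Nf Dp q δ v / (κ * θ * Mf Dp q δ θ v))

include hgood

lemma hasDerivAt_oneSubSf {v : ℝ} (hv : 0 ≤ v) :
    HasDerivAt (fun v => 1 - Sf Dp q δ v) (Bf Dp q δ v) v := by
  simpa using (hasDerivAt_const v (1:ℝ)).fun_sub (hasDerivAt_Sf Dp q δ hgood hv)

lemma hasDerivAt_Ff {v : ℝ} (hv : 0 ≤ v) (hS : Sf Dp q δ v < 1) :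
    HasDerivAt (Ff Dp q δ κ θ)
      (-(κ * θ * Bf Dp q δ v / (1 - Sf Dp q δ v)^2) - κ) v := by
  have h1 := hasDerivAt_oneSubSf Dp q δ hgood hv
  have hne : 1 - Sf Dp q δ v ≠ 0 := by linarith
  have h2 := ((hasDerivAt_const v (κ * θ)).div h1 hne).fun_sub
    ((hasDerivAt_id v).const_mul κ)
  convert! h2 using 1
  field_simp [Ff]
  ring

lemma hasDerivAt_Gf {v : ℝ} (hv : 0 ≤ v) :
    HasDerivAt (Gf Dp q δ θ)
      ((1 - Sf Dp q δ v + v * Bf Dp q δ v) / θ) v := by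
  have h1 := hasDerivAt_oneSubSf Dp q δ hgood hv
  have h2 := ((hasDerivAt_id v).fun_mul h1).div_const θ
  convert! h2 using 1
  simp [id_eq]

lemma hasDerivAt_Nf {v : ℝ} (hv : 0 ≤ v) :
    HasDerivAt (Nf Dp q δ)
      ((2 * Bf Dp q δ v - v * Cf Dp q δ v) * (1 - Sf Dp q δ v)^2
        + 2 * (1 - Sf Dp q δ v) * Bf Dp q δ v
          * (1 - Sf Dp q δ v + v * Bf Dp q δ v)) v := by
  have h1 := hasDerivAt_oneSubSf Dp q δ hgood hv
  have hB := hasDerivAt_Bf Dp q δ hgood hv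
  have h2 := (h1.fun_add ((hasDerivAt_id v).fun_mul hB)).fun_mul (h1.fun_pow 2)
  convert! h2 using 1
  simp only [id_eq]
  push_cast
  ring

lemma hasDerivAt_Mf {v : ℝ} (hv : 0 ≤ v) :
    HasDerivAt (Mf Dp q δ θ)
      (-(θ * Cf Dp q δ v) + 2 * (1 - Sf Dp q δ v) * Bf Dp q δ v) v := by
  have h1 := hasDerivAt_oneSubSf Dp q δ hgood hv
  have hB := hasDerivAt_Bf Dp q δ hgood hv
  have h2 := (hB.const_mul θ).fun_add (h1.fun_pow 2)
  convert! h2 using 1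
  ring

lemma Mf_pos {v : ℝ} (hθ : 0 < θ) (hv : 0 ≤ v) (hS : Sf Dp q δ v < 1) :
    0 < Mf Dp q δ θ v := by
  have hB := Bf_nonneg Dp q δ hgood hv
  have hA : 0 < 1 - Sf Dp q δ v := by linarith
  unfold Mf
  nlinarith

lemma hasDerivAt_Rf {v : ℝ} (hκ : 0 < κ) (hθ : 0 < θ) (hv : 0 ≤ v)
    (hS : Sf Dp q δ v < 1) :
    HasDerivAt (Rf Dp q δ κ θ)
      (-((((2 * Bf Dp q δ v - v * Cf Dp q δ v) * (1 - Sf Dp q δ v)^2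
            + 2 * (1 - Sf Dp q δ v) * Bf Dp q δ v * (1 - Sf Dp q δ v + v * Bf Dp q δ v))
            * (κ * θ * Mf Dp q δ θ v)
          - Nf Dp q δ v * (κ * θ * (-(θ * Cf Dp q δ v) + 2 * (1 - Sf Dp q δ v) * Bf Dp q δ v)))
        / (κ * θ * Mf Dp q δ θ v)^2)) v := by
  have hN := hasDerivAt_Nf Dp q δ hgood hv
  have hM := (hasDerivAt_Mf Dp q δ hgood θ hv).const_mul (κ * θ)
  have hMne : κ * θ * Mf Dp q δ θ v ≠ 0 := by
    have := Mf_pos Dp q δ hgood θ hθ hv hS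
    positivity
  exact (hN.div hM hMne).neg

lemma Rf_deriv_nonpos {v : ℝ} (hκ : 0 < κ) (hθ : 0 < θ) (hv : 0 ≤ v)
    (hS : Sf Dp q δ v < 1) :
    deriv (Rf Dp q δ κ θ) v ≤ 0 := by
  rw [(hasDerivAt_Rf Dp q δ hgood κ θ hκ hθ hv hS).deriv]
  rw [neg_nonpos]
  apply div_nonneg _ (by positivity)
  have hB := Bf_nonneg Dp q δ hgood hv
  have hC := Cf_nonneg Dp q δ hgood hv
  have hkey := key_ineq Dp q δ hgood hv
  have hA : 0 < 1 - Sf Dp q δ v := by linarith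
  set A := 1 - Sf Dp q δ v with hAdef
  set Bv := Bf Dp q δ v
  set Cv := Cf Dp q δ v
  have hid : ((2 * Bv - v * Cv) * A^2 + 2 * A * Bv * (A + v * Bv))
        * (κ * θ * (θ * Bv + A^2))
      - (A + v * Bv) * A^2 * (κ * θ * (-(θ * Cv) + 2 * A * Bv))
    = κ * θ * (2 * θ * A^2 * Bv^2 + θ * Cv * A^3 + (2 * Bv - v * Cv) * A^4
        + 2 * θ * A * Bv^2 * (A + v * Bv)) := by ring
  have hNf : Nf Dp q δ v = (A + v * Bv) * A^2 := by
    unfold Nf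
    ring
  have hMf : Mf Dp q δ θ v = θ * Bv + A^2 := by rfl
  rw [hNf, hMf]
  have h1 : (1 - Sf Dp q δ v + v * Bf Dp q δ v) = A + v * Bv := by rw [hAdef]
  rw [h1, hid]
  have h2B : 0 ≤ 2 * Bv - v * Cv := by linarith
  positivity

lemma Rf_antitoneOn {a b : ℝ} (hκ : 0 < κ) (hθ : 0 < θ) (ha : 0 < a)
    (hS : Sf Dp q δ a < 1) :
    AntitoneOn (Rf Dp q δ κ θ) (Set.Icc a b) := by
  have hcond : ∀ v ∈ Set.Icc a b, 0 ≤ v ∧ Sf Dp q δ v < 1 := by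
    intro v hv
    have h0 : (0:ℝ) ≤ v := le_of_lt (lt_of_lt_of_le ha hv.1)
    exact ⟨h0, lt_of_le_of_lt (Sf_anti Dp q δ hgood ha.le hv.1) hS⟩
  apply antitoneOn_of_deriv_nonpos (convex_Icc a b)
  · intro v hv
    obtain ⟨h0, hSv⟩ := hcond v hv
    exact (hasDerivAt_Rf Dp q δ hgood κ θ hκ hθ h0 hSv).differentiableAt.continuousAt.continuousWithinAt
  · intro v hv
    rw [interior_Icc] at hv
    obtain ⟨h0, hSv⟩ := hcond v ⟨hv.1.le, hv.2.le⟩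
    exact (hasDerivAt_Rf Dp q δ hgood κ θ hκ hθ h0 hSv).differentiableAt.differentiableWithinAt
  · intro v hv
    rw [interior_Icc] at hv
    obtain ⟨h0, hSv⟩ := hcond v ⟨hv.1.le, hv.2.le⟩
    exact Rf_deriv_nonpos Dp q δ hgood κ θ hκ hθ h0 hSv

lemma Gf_deriv_eq_Rf_mul {v : ℝ} (hκ : 0 < κ) (hθ : 0 < θ) (hv : 0 ≤ v)
    (hS : Sf Dp q δ v < 1) :
    (1 - Sf Dp q δ v + v * Bf Dp q δ v) / θ
      = Rf Dp q δ κ θ v * (-(κ * θ * Bf Dp q δ v / (1 - Sf Dp q δ v)^2) - κ) := by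
  have hA : 0 < 1 - Sf Dp q δ v := by linarith
  have hM := Mf_pos Dp q δ hgood θ hθ hv hS
  unfold Rf Nf
  unfold Mf at hM ⊢
  have hMne := hM.ne'
  have hAne := hA.ne'
  have hκne := hκ.ne'
  have hθne := hθ.ne'
  have e : -(κ * θ * Bf Dp q δ v / (1 - Sf Dp q δ v)^2) - κ
      = -(κ * (θ * Bf Dp q δ v + (1 - Sf Dp q δ v)^2) / (1 - Sf Dp q δ v)^2) := by
    field_simp
    ring
  rw [e]
  field_simp
  exact (mul_div_cancel_right₀ _ (by rw [mul_comm]; exact hMne)).symm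

lemma support_line {v v₀ : ℝ} (hκ : 0 < κ) (hθ : 0 < θ) (hv : 0 < v) (hv₀ : 0 < v₀)
    (hSv : Sf Dp q δ v < 1) (hSv₀ : Sf Dp q δ v₀ < 1) :
    Gf Dp q δ θ v₀ - Rf Dp q δ κ θ v₀ * Ff Dp q δ κ θ v₀
      ≤ Gf Dp q δ θ v - Rf Dp q δ κ θ v₀ * Ff Dp q δ κ θ v := by
  set m₀ := Rf Dp q δ κ θ v₀ with hm₀
  set Φ : ℝ → ℝ := fun u => Gf Dp q δ θ u - m₀ * Ff Dp q δ κ θ u with hΦ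
  have hΦderiv : ∀ u : ℝ, 0 < u → Sf Dp q δ u < 1 →
      HasDerivAt Φ ((Rf Dp q δ κ θ u - m₀)
        * (-(κ * θ * Bf Dp q δ u / (1 - Sf Dp q δ u)^2) - κ)) u := by
    intro u hu hSu
    have hG := hasDerivAt_Gf Dp q δ hgood θ hu.le
    have hF := (hasDerivAt_Ff Dp q δ hgood κ θ hu.le hSu).const_mul m₀
    have := hG.fun_sub hF
    convert! this using 1
    rw [Gf_deriv_eq_Rf_mul Dp q δ hgood κ θ hκ hθ hu.le hSu]
    ring
  have hFneg : ∀ u : ℝ, 0 ≤ u → Sf Dp q δ u < 1 →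
      -(κ * θ * Bf Dp q δ u / (1 - Sf Dp q δ u)^2) - κ < 0 := by
    intro u hu hSu
    have hB := Bf_nonneg Dp q δ hgood hu
    have hA : 0 < 1 - Sf Dp q δ u := by linarith
    have : 0 ≤ κ * θ * Bf Dp q δ u / (1 - Sf Dp q δ u)^2 := by positivity
    linarith
  rcases le_total v v₀ with hle | hle
  · -- v ≤ v₀ : Φ antitone on [v, v₀]
    have hanti : AntitoneOn Φ (Set.Icc v v₀) := by
      have hRanti := Rf_antitoneOn Dp q δ hgood κ θ hκ hθ hv (b := v₀) hSv
      apply antitoneOn_of_deriv_nonpos (convex_Icc v v₀)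
      · intro u hu
        have hu0 : 0 < u := lt_of_lt_of_le hv hu.1
        have hSu : Sf Dp q δ u < 1 := lt_of_le_of_lt (Sf_anti Dp q δ hgood hv.le hu.1) hSv
        exact (hΦderiv u hu0 hSu).differentiableAt.continuousAt.continuousWithinAt
      · intro u hu
        rw [interior_Icc] at hu
        have hu0 : 0 < u := lt_trans hv hu.1
        have hSu : Sf Dp q δ u < 1 := lt_of_le_of_lt (Sf_anti Dp q δ hgood hv.le hu.1.le) hSv
        exact (hΦderiv u hu0 hSu).differentiableAt.differentiableWithinAt
      · intro u hu
        rw [interior_Icc] at hu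
        have hu0 : 0 < u := lt_trans hv hu.1
        have hSu : Sf Dp q δ u < 1 := lt_of_le_of_lt (Sf_anti Dp q δ hgood hv.le hu.1.le) hSv
        rw [(hΦderiv u hu0 hSu).deriv]
        have hR : m₀ ≤ Rf Dp q δ κ θ u :=
          hRanti ⟨hu.1.le, hu.2.le⟩ ⟨hle, le_refl v₀⟩ hu.2.le
        have hF := hFneg u hu0.le hSu
        nlinarith
    exact hanti ⟨le_refl v, hle⟩ ⟨hle, le_refl v₀⟩ hle
  · -- v₀ ≤ v : Φ monotone on [v₀, v]
    have hmono : MonotoneOn Φ (Set.Icc v₀ v) := by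
      have hRanti := Rf_antitoneOn Dp q δ hgood κ θ hκ hθ hv₀ (b := v) hSv₀
      apply monotoneOn_of_deriv_nonneg (convex_Icc v₀ v)
      · intro u hu
        have hu0 : 0 < u := lt_of_lt_of_le hv₀ hu.1
        have hSu : Sf Dp q δ u < 1 := lt_of_le_of_lt (Sf_anti Dp q δ hgood hv₀.le hu.1) hSv₀
        exact (hΦderiv u hu0 hSu).differentiableAt.continuousAt.continuousWithinAt
      · intro u hu
        rw [interior_Icc] at hu
        have hu0 : 0 < u := lt_trans hv₀ hu.1
        have hSu : Sf Dp q δ u < 1 := lt_of_le_of_lt (Sf_anti Dp q δ hgood hv₀.le hu.1.le) hSv₀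
        exact (hΦderiv u hu0 hSu).differentiableAt.differentiableWithinAt
      · intro u hu
        rw [interior_Icc] at hu
        have hu0 : 0 < u := lt_trans hv₀ hu.1
        have hSu : Sf Dp q δ u < 1 := lt_of_le_of_lt (Sf_anti Dp q δ hgood hv₀.le hu.1.le) hSv₀
        rw [(hΦderiv u hu0 hSu).deriv]
        have hR : Rf Dp q δ κ θ u ≤ m₀ :=
          hRanti ⟨le_refl v₀, hle⟩ ⟨hu.1.le, hu.2.le⟩ hu.1.le
        have hF := hFneg u hu0.le hSu
        nlinarith
    exact hmono ⟨le_refl v₀, hle⟩ ⟨hle, le_refl v⟩ hle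

end
end Stmt6Aux

open Stmt6Aux

/-- In the setting of the implicit function `V` of Statement 5
(the endemic-state neighbor infection probability as a function of the curing rate
`t = δ_k` of degree-`k` nodes), the steady-state infection probability of degree-`k`
nodes, `x_k(t) = k V(t) / (t + k V(t))`, is strictly decreasing and convex
on `[0, δ̂_k)`. -/
theorem infection_probability_strictAnti_convex_in_own_rate
    (D : Finset ℕ) (hD : ∀ i ∈ D, 0 < i)
    (q : ℕ → ℝ) (hq : ∀ i ∈ D, 0 < q i) (hqsum : ∑ i ∈ D, q i = 1)
    (k : ℕ) (hk : k ∈ D)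
    (δ : ℕ → ℝ) (hδ : ∀ i ∈ D, i ≠ k → 0 < δ i)
    (hsum : ∑ i ∈ D.erase k, (i : ℝ) * q i / δ i < 1)
    (δhat : ℝ)
    (hδhat : δhat = (k : ℝ) * q k * (1 - ∑ i ∈ D.erase k, (i : ℝ) * q i / δ i)⁻¹)
    (V : ℝ → ℝ)
    (hV : ∀ t ∈ Set.Ico (0 : ℝ) δhat,
      V t ∈ Set.Ioc (0 : ℝ) 1 ∧
      ∑ i ∈ D.erase k, (i : ℝ) * q i / (δ i + (i : ℝ) * V t)
        + (k : ℝ) * q k / (t + (k : ℝ) * V t) = 1) :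
    StrictAntiOn (fun t => (k : ℝ) * V t / (t + (k : ℝ) * V t)) (Set.Ico 0 δhat) ∧
      ConvexOn ℝ (Set.Ico 0 δhat) (fun t => (k : ℝ) * V t / (t + (k : ℝ) * V t)) := by
  set Dp := D.erase k with hDp
  have hgood : ∀ i ∈ Dp, 0 < (i:ℝ) ∧ 0 < q i ∧ 0 < δ i := by
    intro i hi
    have hiD : i ∈ D := Finset.mem_of_mem_erase hi
    have hik : i ≠ k := Finset.ne_of_mem_erase hi
    exact ⟨by exact_mod_cast hD i hiD, hq i hiD, hδ i hiD hik⟩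
  set κ : ℝ := (k : ℝ) with hκdef
  set θ : ℝ := q k with hθdef
  have hκ : 0 < κ := by rw [hκdef]; exact_mod_cast hD k hk
  have hθ : 0 < θ := hq k hk
  -- key facts about V t
  have key : ∀ t ∈ Set.Ico (0:ℝ) δhat,
      0 < V t ∧ Sf Dp q δ (V t) < 1 ∧ Ff Dp q δ κ θ (V t) = t ∧
        κ * V t / (t + κ * V t) = Gf Dp q δ θ (V t) := by
    intro t ht
    obtain ⟨⟨hv0, hv1⟩, heq⟩ := hV t ht
    have hSdef : Sf Dp q δ (V t) = ∑ i ∈ Dp, (i : ℝ) * q i / (δ i + (i : ℝ) * V t) := rfl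
    have hden : 0 < t + κ * V t := by
      have := ht.1
      nlinarith
    have hfrac : κ * θ / (t + κ * V t) = 1 - Sf Dp q δ (V t) := by
      rw [hSdef]; linarith [heq]
    have hSlt : Sf Dp q δ (V t) < 1 := by
      have h1 : 0 < κ * θ / (t + κ * V t) := by positivity
      linarith
    have hAne : (1 : ℝ) - Sf Dp q δ (V t) ≠ 0 := by linarith
    have hFf : Ff Dp q δ κ θ (V t) = t := by
      unfold Ff
      rw [← hfrac]
      field_simp
      ring
    have hGf : κ * V t / (t + κ * V t) = Gf Dp q δ θ (V t) := by
      unfold Gf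
      rw [← hfrac]
      field_simp
    exact ⟨hv0, hSlt, hFf, hGf⟩
  -- strict antitonicity of V along increasing t
  have hVanti : ∀ t₁ ∈ Set.Ico (0:ℝ) δhat, ∀ t₂ ∈ Set.Ico (0:ℝ) δhat,
      t₁ < t₂ → V t₂ < V t₁ := by
    intro t₁ h₁ t₂ h₂ hlt
    obtain ⟨hv₁, hS₁, hF₁, _⟩ := key t₁ h₁
    obtain ⟨hv₂, hS₂, hF₂, _⟩ := key t₂ h₂
    by_contra hcon
    push_neg at hcon
    -- V t₁ ≤ V t₂ : then Ff (V t₂) ≤ Ff (V t₁) - κ (V t₂ - V t₁) ≤ t₁, contra t₁ < t₂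
    have hSle : Sf Dp q δ (V t₂) ≤ Sf Dp q δ (V t₁) :=
      Sf_anti Dp q δ hgood hv₁.le hcon
    have hA₁ : 0 < 1 - Sf Dp q δ (V t₁) := by linarith
    have hA₂ : 0 < 1 - Sf Dp q δ (V t₂) := by linarith
    have hfracle : κ * θ / (1 - Sf Dp q δ (V t₂)) ≤ κ * θ / (1 - Sf Dp q δ (V t₁)) := by
      apply div_le_div_of_nonneg_left (by positivity) hA₁
      linarith
    have : Ff Dp q δ κ θ (V t₂) ≤ Ff Dp q δ κ θ (V t₁) - κ * (V t₂ - V t₁) := by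
      unfold Ff
      linarith
    rw [hF₁, hF₂] at this
    nlinarith
  constructor
  · -- StrictAntiOn
    intro t₁ h₁ t₂ h₂ hlt
    obtain ⟨hv₁, hS₁, hF₁, hG₁⟩ := key t₁ h₁
    obtain ⟨hv₂, hS₂, hF₂, hG₂⟩ := key t₂ h₂
    have hvlt : V t₂ < V t₁ := hVanti t₁ h₁ t₂ h₂ hlt
    simp only
    rw [hG₁, hG₂]
    unfold Gf
    have hSle : Sf Dp q δ (V t₁) ≤ Sf Dp q δ (V t₂) :=
      Sf_anti Dp q δ hgood hv₂.le hvlt.le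
    have hA₂ : 0 < 1 - Sf Dp q δ (V t₂) := by linarith
    rw [div_lt_div_iff_of_pos_right hθ]
    nlinarith
  · -- ConvexOn
    refine ⟨convex_Ico 0 δhat, ?_⟩
    intro t₁ h₁ t₂ h₂ a b ha hb hab
    have h₀ : a • t₁ + b • t₂ ∈ Set.Ico (0:ℝ) δhat :=
      (convex_Ico 0 δhat) h₁ h₂ ha hb hab
    set t₀ := a • t₁ + b • t₂ with ht₀
    obtain ⟨hv₀, hS₀, hF₀, hG₀⟩ := key t₀ h₀
    obtain ⟨hv₁, hS₁, hF₁, hG₁⟩ := key t₁ h₁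
    obtain ⟨hv₂, hS₂, hF₂, hG₂⟩ := key t₂ h₂
    have hsupp₁ := support_line Dp q δ hgood κ θ hκ hθ hv₁ hv₀ hS₁ hS₀
    have hsupp₂ := support_line Dp q δ hgood κ θ hκ hθ hv₂ hv₀ hS₂ hS₀
    rw [hF₁] at hsupp₁
    rw [hF₂] at hsupp₂
    rw [hF₀] at hsupp₁ hsupp₂
    simp only [smul_eq_mul] at *
    rw [hG₀, hG₁, hG₂]
    set m := Rf Dp q δ κ θ (V t₀) with hm
    have e1 := mul_le_mul_of_nonneg_left hsupp₁ ha
    have e2 := mul_le_mul_of_nonneg_left hsupp₂ hb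
    have e3 : a * (Gf Dp q δ θ (V t₀) - m * t₀) + b * (Gf Dp q δ θ (V t₀) - m * t₀)
        = Gf Dp q δ θ (V t₀) - m * t₀ := by
      rw [← add_mul, hab, one_mul]
    have e4 : a * (Gf Dp q δ θ (V t₁) - m * t₁) + b * (Gf Dp q δ θ (V t₂) - m * t₂)
        = a * Gf Dp q δ θ (V t₁) + b * Gf Dp q δ θ (V t₂) - m * (a * t₁ + b * t₂) := by
      ring
    rw [← ht₀] at e4
    linarith
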